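/- Let θ > 1, α = 1 + ln θ, L > 0, and define ψ : [0,1] → ℝ by ψ(x) = L for x ∈ [0, 1/α) and ψ(x) = L·exp(α·x − 1) for x ∈ [1/α, 1]. Then for all x₁, x₂ with 0 ≤ x₁ ≤ x₂ ≤ 1, we have ∫_{x₁}^{x₂} ψ(x) dx ≥ (ψ(x₂) − ψ(x₁))/α. -/

import Mathlib

open Real Set

theorem stmt_1 (θ L α : ℝ) (hθ : 1 < θ) (hL : 0 < L) (hα : α = 1 + Real.log θ)
    (ψ : ℝ → ℝ)
    (hψ : ∀ x : ℝ, ψ x = if x < 1/α then L else L * Real.exp (α * x - 1)) :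
    ∀ x₁ x₂ : ℝ, 0 ≤ x₁ → x₁ ≤ x₂ → x₂ ≤ 1 →
      (ψ x₂ - ψ x₁) / α ≤ ∫ x in x₁..x₂, ψ x := by
  have hlog : 0 < Real.log θ := Real.log_pos hθ
  have hα1 : 1 < α := by rw [hα]; linarith
  have hα0 : 0 < α := by linarith
  have hαinv : α * (1/α) = 1 := by field_simp
  -- ψ as a max of continuous functions
  have hψ' : ψ = fun x => max L (L * Real.exp (α * x - 1)) := by
    funext x
    rcases lt_or_ge x (1/α) with h | h
    · have hx : α * x - 1 < 0 := by
        have := (mul_lt_mul_iff_right₀ hα0).mpr h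
        rw [hαinv] at this; linarith
      have : L * Real.exp (α * x - 1) < L * 1 := by
        apply mul_lt_mul_of_pos_left _ hL
        simpa using Real.exp_lt_one_iff.mpr hx
      rw [hψ x, if_pos h, max_eq_left (by linarith)]
    · have hx : 0 ≤ α * x - 1 := by
        have := (mul_le_mul_iff_right₀ hα0).mpr h
        rw [hαinv] at this; linarith
      have : L * 1 ≤ L * Real.exp (α * x - 1) := by
        apply mul_le_mul_of_nonneg_left _ hL.le
        simpa using Real.one_le_exp hx
      rw [hψ x, if_neg (not_lt.mpr h), max_eq_right (by linarith)]
  have hcont : Continuous ψ := by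
    rw [hψ']
    exact continuous_const.max (continuous_const.mul
      (Real.continuous_exp.comp ((continuous_const.mul continuous_id).sub continuous_const)))
  have hψL : ∀ x, x ≤ 1/α → ψ x = L := by
    intro x hx
    rcases lt_or_eq_of_le hx with h | h
    · rw [hψ x, if_pos h]
    · rw [hψ x, if_neg (by simp [h]), h, hαinv]; simp
  have hψE : ∀ x, 1/α ≤ x → ψ x = L * Real.exp (α * x - 1) := by
    intro x hx
    rw [hψ x, if_neg (not_lt.mpr hx)]
  -- integral over constant region
  have hconst : ∀ a b : ℝ, a ≤ b → b ≤ 1/α → ∫ x in a..b, ψ x = L * (b - a) := by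
    intro a b hab hb
    have : ∫ x in a..b, ψ x = ∫ _x in a..b, L := by
      apply intervalIntegral.integral_congr
      intro x hx
      rw [Set.uIcc_of_le hab] at hx
      exact hψL x (le_trans hx.2 hb)
    rw [this, intervalIntegral.integral_const, smul_eq_mul, mul_comm]
  -- integral over exponential region
  have hexp : ∀ a b : ℝ, 1/α ≤ a → a ≤ b →
      ∫ x in a..b, ψ x = (L * Real.exp (α * b - 1) - L * Real.exp (α * a - 1)) / α := by
    intro a b ha hab
    have hcong : ∫ x in a..b, ψ x = ∫ x in a..b, L * Real.exp (α * x - 1) := by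
      apply intervalIntegral.integral_congr
      intro x hx
      rw [Set.uIcc_of_le hab] at hx
      exact hψE x (le_trans ha hx.1)
    rw [hcong]
    have hderiv : ∀ x ∈ Set.uIcc a b,
        HasDerivAt (fun y => L / α * Real.exp (α * y - 1)) (L * Real.exp (α * x - 1)) x := by
      intro x _
      have h1 : HasDerivAt (fun y : ℝ => α * y - 1) α x := by
        simpa using ((hasDerivAt_id x).const_mul α).sub_const 1
      have h2 := (h1.exp).const_mul (L / α)
      convert h2 using 1
      · rfl
      · rfl
      field_simp
    rw [intervalIntegral.integral_eq_sub_of_hasDerivAt hderiv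
      ((Continuous.intervalIntegrable (by continuity) a b))]
    field_simp
  intro x₁ x₂ h0 h12 h21
  rcases le_total x₂ (1/α) with h | h
  · rw [hconst x₁ x₂ h12 h, hψL x₂ h, hψL x₁ (le_trans h12 h)]
    have : (0:ℝ) ≤ L * (x₂ - x₁) := mul_nonneg hL.le (by linarith)
    simp only [sub_self, zero_div]
    linarith
  · rcases le_total (1/α) x₁ with h' | h'
    · rw [hexp x₁ x₂ h' h12, hψE x₂ (le_trans h' h12), hψE x₁ h']
    · have hsplit := intervalIntegral.integral_add_adjacent_intervals
        (hcont.intervalIntegrable (μ := MeasureTheory.volume) x₁ (1/α)) (hcont.intervalIntegrable (μ := MeasureTheory.volume) (1/α) x₂)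
      rw [← hsplit, hconst x₁ (1/α) h' le_rfl, hexp (1/α) x₂ le_rfl h,
        hψE x₂ h, hψL x₁ h', hαinv]
      have h1 : (0:ℝ) ≤ L * (1/α - x₁) := mul_nonneg hL.le (by linarith)
      have h2 : Real.exp (1 - 1) = 1 := by norm_num
      rw [h2, mul_one]
      linarith [h1]
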